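/- (Theorem: 𝒯 is unitary.) Suppose the tuple {(n0,n1,n2), B, B_I} is admissible. Then for all x, y ∈ L2^{n_x}, ⟨𝒯x, 𝒯y⟩_X = ⟨x, y⟩_{L2}, where ⟨u,w⟩_X := Σ_{i=0}^2 ⟨∂_s^i u_i, ∂_s^i w_i⟩_{L2} for u, w ∈ X. -/

import Mathlib

open MeasureTheory Matrix Topology Filter

noncomputable section

namespace PIEpaper

/-- The Lebesgue measure restricted to the interval `[a,b]`. -/
def μab (a b : ℝ) : Measure ℝ := volume.restrict (Set.Icc a b)

/-- A matrix-valued function on `[a,b]` is essentially bounded (belongs to `L∞`). -/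
def EssBddMat {ι κ : Type*} (a b : ℝ) (M : ℝ → Matrix ι κ ℝ) : Prop :=
  Measurable (fun s i j => M s i j) ∧ ∃ C : ℝ, ∀ᵐ s ∂(μab a b), ∀ i j, |M s i j| ≤ C

/-- A matrix-valued function on `[a,b]` is (entrywise) square integrable. -/
def SqIntMat {ι κ : Type*} (a b : ℝ) (M : ℝ → Matrix ι κ ℝ) : Prop :=
  Measurable (fun s i j => M s i j) ∧ ∀ i j, MemLp (fun s => M s i j) 2 (μab a b)

/-- A matrix-valued kernel `R : [a,b]² → ℝ^{ι×κ}` is separable if `R(s,θ) = F(s)ᵀ G(θ)`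
for essentially bounded `F, G`. -/
def SepMat {ι κ : Type*} (a b : ℝ) (R : ℝ → ℝ → Matrix ι κ ℝ) : Prop :=
  ∃ (r : ℕ) (F : ℝ → Matrix (Fin r) ι ℝ) (G : ℝ → Matrix (Fin r) κ ℝ),
    EssBddMat a b F ∧ EssBddMat a b G ∧
    ∀ s ∈ Set.Icc a b, ∀ θ ∈ Set.Icc a b, R s θ = (F s)ᵀ * G θ

variable (a b : ℝ) (n0 n1 n2 : ℕ)

/-- Index type for the PDE state blocks `(x0, x1, x2)`, and likewise for the
fundamental state `Dx = (x0, ∂ₛx1, ∂ₛ²x2)`; it has `n_x = n0+n1+n2` elements. -/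
abbrev Ix := Fin n0 ⊕ (Fin n1 ⊕ Fin n2)

/-- Index type for the boundary core `x_c = (x1, x2, ∂ₛx2)`; it has `n_S = n1+2n2` elements. -/
abbrev Ic := Fin n1 ⊕ (Fin n2 ⊕ Fin n2)

/-- Index type for the first two block rows `(n1- and n2-sized)`. -/
abbrev I12 := Fin n1 ⊕ Fin n2

/-- Index type for the full derivative vector
`x_D = (x0, x1, x2, ∂ₛx1, ∂ₛx2, ∂ₛ²x2)` (with `n_x + n_S` elements), organized into the
fundamental-state block `(x0, ∂ₛx1, ∂ₛ²x2)` (left) and the core block `(x1, x2, ∂ₛx2)` (right). -/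
abbrev ID := Ix n0 n1 n2 ⊕ Ic n1 n2

/-- An element of `W^n = W_0^{n0} × W_1^{n1} × W_2^{n2}` on `[a,b]`, encoded through its
components together with their (weak) derivatives: `x1 ∈ W_1` and `x2 ∈ W_2` are identified
with their absolutely continuous representatives, i.e. they satisfy the fundamental theorem
of calculus with square-integrable derivatives `dx1 = ∂ₛx1`, `dx2 = ∂ₛx2`, `ddx2 = ∂ₛ²x2`. -/
structure State where
  x0 : ℝ → Fin n0 → ℝ
  x1 : ℝ → Fin n1 → ℝ
  dx1 : ℝ → Fin n1 → ℝ
  x2 : ℝ → Fin n2 → ℝ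
  dx2 : ℝ → Fin n2 → ℝ
  ddx2 : ℝ → Fin n2 → ℝ
  memLp_x0 : MemLp x0 2 (μab a b)
  memLp_dx1 : MemLp dx1 2 (μab a b)
  memLp_dx2 : MemLp dx2 2 (μab a b)
  memLp_ddx2 : MemLp ddx2 2 (μab a b)
  ftc_x1 : ∀ s ∈ Set.Icc a b, ∀ i, x1 s i = x1 a i + ∫ θ in a..s, dx1 θ i
  ftc_x2 : ∀ s ∈ Set.Icc a b, ∀ i, x2 s i = x2 a i + ∫ θ in a..s, dx2 θ i
  ftc_dx2 : ∀ s ∈ Set.Icc a b, ∀ i, dx2 s i = dx2 a i + ∫ θ in a..s, ddx2 θ i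

variable {a b n0 n1 n2}

/-- The PDE state `x = (x0, x1, x2)` as an `ℝ^{n_x}`-valued function. -/
def xfun (x : State a b n0 n1 n2) (s : ℝ) : Ix n0 n1 n2 → ℝ :=
  Sum.elim (x.x0 s) (Sum.elim (x.x1 s) (x.x2 s))

/-- The fundamental state `Dx = (x0, ∂ₛx1, ∂ₛ²x2)` as an `ℝ^{n_x}`-valued function. -/
def Dx (x : State a b n0 n1 n2) (s : ℝ) : Ix n0 n1 n2 → ℝ :=
  Sum.elim (x.x0 s) (Sum.elim (x.dx1 s) (x.ddx2 s))

/-- The boundary core `x_c = (x1, x2, ∂ₛx2)` as an `ℝ^{n_S}`-valued function. -/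
def xc (x : State a b n0 n1 n2) (s : ℝ) : Ic n1 n2 → ℝ :=
  Sum.elim (x.x1 s) (Sum.elim (x.x2 s) (x.dx2 s))

/-- The full derivative vector `x_D = (x0, x1, x2, ∂ₛx1, ∂ₛx2, ∂ₛ²x2)`. -/
def xD (x : State a b n0 n1 n2) (s : ℝ) : ID n0 n1 n2 → ℝ :=
  Sum.elim (Dx x s) (xc x s)

/-- The boundary-value vector `x_b = (x_c(a), x_c(b)) ∈ ℝ^{2 n_S}`. -/
def xb (x : State a b n0 n1 n2) : (Ic n1 n2 ⊕ Ic n1 n2) → ℝ :=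
  Sum.elim (xc x a) (xc x b)

variable (a b n0 n1 n2)

/-- `T(η) = [[I,0,0],[0,I,ηI],[0,0,I]] ∈ ℝ^{n_S × n_S}`. -/
def Tmat (η : ℝ) : Matrix (Ic n1 n2) (Ic n1 n2) ℝ :=
  Matrix.of fun i j =>
    match i, j with
    | .inl i, .inl j => if i = j then (1:ℝ) else 0
    | .inr (.inl i), .inr (.inl j) => if i = j then (1:ℝ) else 0
    | .inr (.inl i), .inr (.inr j) => if i = j then η else 0
    | .inr (.inr i), .inr (.inr j) => if i = j then (1:ℝ) else 0
    | _, _ => 0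

/-- `Q(η) = [[0,I_{n1},0],[0,0,ηI_{n2}],[0,0,I_{n2}]] ∈ ℝ^{n_S × n_x}`. -/
def Qmat (η : ℝ) : Matrix (Ic n1 n2) (Ix n0 n1 n2) ℝ :=
  Matrix.of fun i j =>
    match i, j with
    | .inl i, .inr (.inl j) => if i = j then (1:ℝ) else 0
    | .inr (.inl i), .inr (.inr j) => if i = j then η else 0
    | .inr (.inr i), .inr (.inr j) => if i = j then (1:ℝ) else 0
    | _, _ => 0

/-- Embedding of the first two block rows into the `x_c` index. -/
def emb12 : I12 n1 n2 → Ic n1 n2 := Sum.elim Sum.inl (fun k => Sum.inr (Sum.inl k))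

/-- `T1(η)`: the first two block rows of `T(η)`. -/
def T1mat (η : ℝ) : Matrix (I12 n1 n2) (Ic n1 n2) ℝ :=
  Matrix.of fun i j => Tmat n1 n2 η (emb12 n1 n2 i) j

/-- `Q1(η)`: the first two block rows of `Q(η)`. -/
def Q1mat (η : ℝ) : Matrix (I12 n1 n2) (Ix n0 n1 n2) ℝ :=
  Matrix.of fun i j => Qmat n0 n1 n2 η (emb12 n1 n2 i) j

/-- `U1 ∈ ℝ^{(n_x+n_S) × n_x}`: the 0-1 matrix placing `(v0,v1,v2)` into the
`x0`, `∂ₛx1` and `∂ₛ²x2` blocks of the `x_D` ordering. -/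
def U1 : Matrix (ID n0 n1 n2) (Ix n0 n1 n2) ℝ :=
  Matrix.of fun i j =>
    match i with
    | .inl i' => if i' = j then (1:ℝ) else 0
    | .inr _ => 0

/-- `U2 ∈ ℝ^{(n_x+n_S) × n_S}`: the 0-1 matrix placing `(w1,w2,w3)` into the
`x1`, `x2` and `∂ₛx2` blocks of the `x_D` ordering. -/
def U2 : Matrix (ID n0 n1 n2) (Ic n1 n2) ℝ :=
  Matrix.of fun i j =>
    match i with
    | .inl _ => (0:ℝ)
    | .inr i' => if i' = j then 1 else 0

/-- The stacked matrix `[T(0); T(b-a)] ∈ ℝ^{2n_S × n_S}`. -/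
def Tstack : Matrix (Ic n1 n2 ⊕ Ic n1 n2) (Ic n1 n2) ℝ :=
  Matrix.of fun i j =>
    match i with
    | .inl i' => Tmat n1 n2 0 i' j
    | .inr i' => Tmat n1 n2 (b - a) i' j

/-- The stacked matrix `[0_{n_S×n_x}; Q(η)] ∈ ℝ^{2n_S × n_x}`. -/
def Qstack (η : ℝ) : Matrix (Ic n1 n2 ⊕ Ic n1 n2) (Ix n0 n1 n2) ℝ :=
  Matrix.of fun i j =>
    match i with
    | .inl _ => (0:ℝ)
    | .inr i' => Qmat n0 n1 n2 η i' j

variable (B : Matrix (Ic n1 n2) (Ic n1 n2 ⊕ Ic n1 n2) ℝ)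
variable (B_I : ℝ → Matrix (Ic n1 n2) (ID n0 n1 n2) ℝ)

/-- `B_T = B [T(0); T(b−a)] − ∫_a^b B_I(s) U2 T(s−a) ds`. -/
def BT : Matrix (Ic n1 n2) (Ic n1 n2) ℝ :=
  B * Tstack a b n1 n2 -
    Matrix.of fun i j => ∫ s in a..b, (B_I s * U2 n0 n1 n2 * Tmat n1 n2 (s - a)) i j

/-- Admissibility of the boundary conditions: `B_T` is invertible. -/
def Admissible : Prop := IsUnit (BT a b n0 n1 n2 B B_I).det

/-- `B_Q(s) = B_T⁻¹ ( B_I(s) U1 − B [0; Q(b−s)] + ∫_s^b B_I(θ) U2 Q(θ−s) dθ )`. -/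
def BQ (s : ℝ) : Matrix (Ic n1 n2) (Ix n0 n1 n2) ℝ :=
  (BT a b n0 n1 n2 B B_I)⁻¹ *
    (B_I s * U1 n0 n1 n2 - B * Qstack n0 n1 n2 (b - s) +
      Matrix.of fun i j => ∫ θ in s..b, (B_I θ * U2 n0 n1 n2 * Qmat n0 n1 n2 (θ - s)) i j)

/-- The boundary condition `B x_b = ∫_a^b B_I(s) x_D(s) ds` defining the set `X`;
  together with the regularity encoded in `State` this says `x ∈ X`. -/
def BCholds (x : State a b n0 n1 n2) : Prop :=
  ∀ i, B.mulVec (xb x) i = ∫ s in a..b, (B_I s).mulVec (xD x s) i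

/-- `G0 = diag(I_{n0}, 0_{n1+n2})`. -/
def G0 : Matrix (Ix n0 n1 n2) (Ix n0 n1 n2) ℝ :=
  Matrix.of fun i j =>
    match i, j with
    | .inl i', .inl j' => if i' = j' then (1:ℝ) else 0
    | _, _ => 0

/-- `G2(s,θ) = [0_{n0×n_x}; T1(s−a) B_Q(θ)]`. -/
def G2 (s θ : ℝ) : Matrix (Ix n0 n1 n2) (Ix n0 n1 n2) ℝ :=
  Matrix.of fun i j =>
    match i with
    | .inl _ => (0:ℝ)
    | .inr i' => (T1mat n1 n2 (s - a) * BQ a b n0 n1 n2 B B_I θ) i' j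

/-- `G1(s,θ) = [0_{n0×n_x}; Q1(s−θ)] + G2(s,θ)`. -/
def G1 (s θ : ℝ) : Matrix (Ix n0 n1 n2) (Ix n0 n1 n2) ℝ :=
  (Matrix.of fun i j =>
    match i with
    | .inl _ => (0:ℝ)
    | .inr i' => Q1mat n0 n1 n2 (s - θ) i' j) + G2 a b n0 n1 n2 B B_I s θ

/-- The PI operator `𝒯`, acting on (representatives of) functions in `L2^{n_x}`:
`(𝒯v)(s) = G0 v(s) + ∫_a^s G1(s,θ) v(θ) dθ + ∫_s^b G2(s,θ) v(θ) dθ`. -/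
def Tfun (v : ℝ → Ix n0 n1 n2 → ℝ) (s : ℝ) : Ix n0 n1 n2 → ℝ := fun i =>
  (G0 n0 n1 n2).mulVec (v s) i
  + (∫ θ in a..s, (G1 a b n0 n1 n2 B B_I s θ).mulVec (v θ) i)
  + (∫ θ in s..b, (G2 a b n0 n1 n2 B B_I s θ).mulVec (v θ) i)

/-- `R_{D,2}(s,θ) = U2 T(s−a) B_Q(θ)`. -/
def RD2 (s θ : ℝ) : Matrix (ID n0 n1 n2) (Ix n0 n1 n2) ℝ :=
  U2 n0 n1 n2 * Tmat n1 n2 (s - a) * BQ a b n0 n1 n2 B B_I θ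

/-- `R_{D,1}(s,θ) = R_{D,2}(s,θ) + U2 Q(s−θ)`. -/
def RD1 (s θ : ℝ) : Matrix (ID n0 n1 n2) (Ix n0 n1 n2) ℝ :=
  RD2 a b n0 n1 n2 B B_I s θ + U2 n0 n1 n2 * Qmat n0 n1 n2 (s - θ)

end PIEpaper

namespace PIEpaper
variable (a b : ℝ) (n0 n1 n2 : ℕ)
variable (B : Matrix (Ic n1 n2) (Ic n1 n2 ⊕ Ic n1 n2) ℝ)
variable (B_I : ℝ → Matrix (Ic n1 n2) (ID n0 n1 n2) ℝ)

/-- The `L2[a,b]` norm of an `ℝ^ι`-valued function. -/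
def L2norm {ι : Type*} [Fintype ι] (f : ℝ → ι → ℝ) : ℝ :=
  Real.sqrt (∫ s in a..b, ∑ i, (f s i) ^ 2)

/-- The `L2[a,b]` inner product of two `ℝ^ι`-valued functions. -/
def L2inner {ι : Type*} [Fintype ι] (f g : ℝ → ι → ℝ) : ℝ :=
  ∫ s in a..b, ∑ i, f s i * g s i

variable (A0 : ℝ → Matrix (Ix n0 n1 n2) (ID n0 n1 n2) ℝ)
variable (A1 A2 : ℝ → ℝ → Matrix (Ix n0 n1 n2) (ID n0 n1 n2) ℝ)

/-- `Â0(s) = A0(s) U1`. -/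
def Ahat0 (s : ℝ) : Matrix (Ix n0 n1 n2) (Ix n0 n1 n2) ℝ := A0 s * U1 n0 n1 n2

/-- `Â1(s,θ)`. -/
def Ahat1 (s θ : ℝ) : Matrix (Ix n0 n1 n2) (Ix n0 n1 n2) ℝ :=
  A0 s * RD1 a b n0 n1 n2 B B_I s θ + A1 s θ * U1 n0 n1 n2
  + (Matrix.of fun i j => ∫ β in a..θ, (A1 s β * RD2 a b n0 n1 n2 B B_I β θ) i j)
  + (Matrix.of fun i j => ∫ β in θ..s, (A1 s β * RD1 a b n0 n1 n2 B B_I β θ) i j)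
  + (Matrix.of fun i j => ∫ β in s..b, (A2 s β * RD1 a b n0 n1 n2 B B_I β θ) i j)

/-- `Â2(s,θ)`. -/
def Ahat2 (s θ : ℝ) : Matrix (Ix n0 n1 n2) (Ix n0 n1 n2) ℝ :=
  A0 s * RD2 a b n0 n1 n2 B B_I s θ + A2 s θ * U1 n0 n1 n2
  + (Matrix.of fun i j => ∫ β in a..s, (A1 s β * RD2 a b n0 n1 n2 B B_I β θ) i j)
  + (Matrix.of fun i j => ∫ β in s..θ, (A2 s β * RD2 a b n0 n1 n2 B B_I β θ) i j)
  + (Matrix.of fun i j => ∫ β in θ..b, (A2 s β * RD1 a b n0 n1 n2 B B_I β θ) i j)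

/-- The PI operator `𝒜`:
`(𝒜v)(s) = Â0(s) v(s) + ∫_a^s Â1(s,θ) v(θ) dθ + ∫_s^b Â2(s,θ) v(θ) dθ`. -/
def Afun (v : ℝ → Ix n0 n1 n2 → ℝ) (s : ℝ) : Ix n0 n1 n2 → ℝ := fun i =>
  (Ahat0 n0 n1 n2 A0 s).mulVec (v s) i
  + (∫ θ in a..s, (Ahat1 a b n0 n1 n2 B B_I A0 A1 A2 s θ).mulVec (v θ) i)
  + (∫ θ in s..b, (Ahat2 a b n0 n1 n2 B B_I A0 A1 A2 s θ).mulVec (v θ) i)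

/-- The right-hand side of the PDE dynamics:
`A0(s) x_D(s) + ∫_a^s A1(s,θ) x_D(θ) dθ + ∫_s^b A2(s,θ) x_D(θ) dθ`. -/
def PDErhs (x : State a b n0 n1 n2) (s : ℝ) : Ix n0 n1 n2 → ℝ := fun i =>
  (A0 s).mulVec (xD x s) i
  + (∫ θ in a..s, (A1 s θ).mulVec (xD x θ) i)
  + (∫ θ in s..b, (A2 s θ).mulVec (xD x θ) i)

/-- `t ↦ u(t)` is Fréchet differentiable at `t` with respect to the `L2[a,b]` norm,
with derivative `g`. -/
def HasL2DerivAt (u : ℝ → ℝ → Ix n0 n1 n2 → ℝ) (g : ℝ → Ix n0 n1 n2 → ℝ) (t : ℝ) : Prop :=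
  Tendsto (fun h : ℝ =>
      L2norm a b (fun s i => (u (t + h) s i - u t s i) / h - g s i))
    (nhdsWithin 0 {0}ᶜ) (nhds 0)

/-- `t ↦ u(t)` is Fréchet differentiable at `t` with respect to the `𝒯`-norm
`v ↦ ‖𝒯v‖_{L2}`, with derivative `g`. -/
def HasTDerivAt (u : ℝ → ℝ → Ix n0 n1 n2 → ℝ) (g : ℝ → Ix n0 n1 n2 → ℝ) (t : ℝ) : Prop :=
  Tendsto (fun h : ℝ =>
      L2norm a b (Tfun a b n0 n1 n2 B B_I
        (fun s i => (u (t + h) s i - u t s i) / h - g s i)))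
    (nhdsWithin 0 {0}ᶜ) (nhds 0)

/-- `x : [0,∞) → W^n` satisfies the PDE defined by `{(n0,n1,n2), B, B_I, A0, A1, A2}` with
initial condition `x⁰ ∈ X`: `x(t) ∈ X` for all `t ≥ 0`, `x(0) = x⁰`, and for almost every
`t ≥ 0`, `x` is Fréchet differentiable (w.r.t. the `L2` norm) at `t` with derivative `ẋ(t)`
satisfying the dynamics for almost every `s ∈ [a,b]`. -/
def SatisfiesPDE (x : ℝ → State a b n0 n1 n2) (x0 : State a b n0 n1 n2) : Prop :=
  (∀ t, 0 ≤ t → BCholds a b n0 n1 n2 B B_I (x t)) ∧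
  (∀ᵐ s ∂(μab a b), ∀ i, xfun (x 0) s i = xfun x0 s i) ∧
  (∀ᵐ t ∂(volume.restrict (Set.Ici (0:ℝ))), ∃ g : ℝ → Ix n0 n1 n2 → ℝ,
    HasL2DerivAt a b n0 n1 n2 (fun τ => xfun (x τ)) g t ∧
    ∀ᵐ s ∂(μab a b), ∀ i, g s i = PDErhs a b n0 n1 n2 A0 A1 A2 (x t) s i)

/-- `x_f : [0,∞) → L2^{n_x}` satisfies the PIE defined by `{𝒯, 𝒜}` with initial condition
`x_f⁰ ∈ L2^{n_x}`: `x_f(t) ∈ L2` for all `t ≥ 0`, `x_f(0) = x_f⁰`, and for almost every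
`t ≥ 0`, `x_f` is Fréchet differentiable w.r.t. the `𝒯`-norm at `t` with derivative
`ẋ_f(t)` satisfying `𝒯 ẋ_f(t) = 𝒜 x_f(t)` for almost every `s ∈ [a,b]`. -/
def SatisfiesPIE (xf : ℝ → ℝ → Ix n0 n1 n2 → ℝ) (xf0 : ℝ → Ix n0 n1 n2 → ℝ) : Prop :=
  (∀ t, 0 ≤ t → MemLp (xf t) 2 (μab a b)) ∧
  (∀ᵐ s ∂(μab a b), ∀ i, xf 0 s i = xf0 s i) ∧
  (∀ᵐ t ∂(volume.restrict (Set.Ici (0:ℝ))), ∃ g : ℝ → Ix n0 n1 n2 → ℝ,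
    HasTDerivAt a b n0 n1 n2 B B_I xf g t ∧
    ∀ᵐ s ∂(μab a b), ∀ i,
      Tfun a b n0 n1 n2 B B_I g s i = Afun a b n0 n1 n2 B B_I A0 A1 A2 (xf t) s i)

/-- The `X`-norm `‖x‖_X = (Σ_{i=0}^2 ‖∂ₛ^i x_i‖²_{L2})^{1/2}`. -/
def normX (x : State a b n0 n1 n2) : ℝ :=
  Real.sqrt ((L2norm a b x.x0) ^ 2 + (L2norm a b x.dx1) ^ 2 + (L2norm a b x.ddx2) ^ 2)

/-- The Sobolev-type norm `‖x‖_H = Σ_{i=0}^2 Σ_{j=0}^i ‖∂ₛ^j x_i‖_{L2}`. -/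
def normH (x : State a b n0 n1 n2) : ℝ :=
  L2norm a b x.x0 + (L2norm a b x.x1 + L2norm a b x.dx1)
    + (L2norm a b x.x2 + L2norm a b x.dx2 + L2norm a b x.ddx2)

/-- The PDE defined by `{(n0,n1,n2), B, B_I, A0, A1, A2}` is exponentially stable. -/
def ExpStablePDE : Prop :=
  ∃ M > (0:ℝ), ∃ α > (0:ℝ), ∀ x0 : State a b n0 n1 n2, BCholds a b n0 n1 n2 B B_I x0 →
    ∀ x : ℝ → State a b n0 n1 n2, SatisfiesPDE a b n0 n1 n2 B B_I A0 A1 A2 x x0 →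
      ∀ t, 0 ≤ t → normH a b n0 n1 n2 (x t) ≤ M * normH a b n0 n1 n2 x0 * Real.exp (-α * t)

/-- The PIE defined by `{𝒯, 𝒜}` is exponentially stable. -/
def ExpStablePIE : Prop :=
  ∃ M > (0:ℝ), ∃ α > (0:ℝ), ∀ xf0 : ℝ → Ix n0 n1 n2 → ℝ, MemLp xf0 2 (μab a b) →
    ∀ xf : ℝ → ℝ → Ix n0 n1 n2 → ℝ,
      SatisfiesPIE a b n0 n1 n2 B B_I A0 A1 A2 xf xf0 →
      ∀ t, 0 ≤ t → L2norm a b (xf t) ≤ M * L2norm a b xf0 * Real.exp (-α * t)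

/-- The `X`-inner product `⟨u,w⟩_X = Σ_{i=0}^2 ⟨∂ₛ^i u_i, ∂ₛ^i w_i⟩_{L2}` of two
`ℝ^{n_x}`-valued functions, where the spatial derivatives of the `W_1`- and `W_2`-blocks
are taken classically (they exist a.e. for elements of `X`). -/
def XinnerF (u w : ℝ → Ix n0 n1 n2 → ℝ) : ℝ :=
  (∫ s in a..b, ∑ i : Fin n0, u s (Sum.inl i) * w s (Sum.inl i))
  + (∫ s in a..b, ∑ i : Fin n1,
      deriv (fun t => u t (Sum.inr (Sum.inl i))) s *
      deriv (fun t => w t (Sum.inr (Sum.inl i))) s)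
  + (∫ s in a..b, ∑ i : Fin n2,
      deriv (deriv (fun t => u t (Sum.inr (Sum.inr i)))) s *
      deriv (deriv (fun t => w t (Sum.inr (Sum.inr i)))) s)

/-- The `X`-distance between two elements of `X`, induced by the `X`-norm:
`‖u − v‖_X = ‖Du − Dv‖_{L2}`. -/
def distX (u v : State a b n0 n1 n2) : ℝ :=
  Real.sqrt (∫ s in a..b, ∑ i, (Dx u s i - Dx v s i) ^ 2)

end PIEpaper

section AuxUnitary
open MeasureTheory Set Filter Topology intervalIntegral Matrix
open scoped Interval
set_option linter.unusedTactic false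
set_option linter.unreachableTactic false

lemma aux_two_halves : (1:ENNReal)/1 = 1/2 + 1/2 := by
  rw [ENNReal.div_add_div_same]; norm_num; rw [ENNReal.div_self] <;> norm_num

lemma aux_mul_int {μ : Measure ℝ} {f g : ℝ → ℝ} (hf : MemLp f 2 μ) (hg : MemLp g 2 μ) :
    Integrable (fun t => f t * g t) μ := by
  have h : MemLp (g • f) 1 μ := hf.smul hg (hpqr := ⟨by simpa [one_div] using aux_two_halves.symm⟩)
  rw [memLp_one_iff_integrable] at h
  exact h.congr (by filter_upwards with t using by simp [mul_comm])

lemma aux_memLp_eval {ι : Type*} [Fintype ι] {μ : Measure ℝ} {v : ℝ → ι → ℝ}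
    (hv : MemLp v 2 μ) (i : ι) : MemLp (fun s => v s i) 2 μ :=
  (ContinuousLinearMap.proj (R := ℝ) (φ := fun _ : ι => ℝ) i).comp_memLp' hv


lemma aux_intInt {a b p q : ℝ} {f : ℝ → ℝ} (hf : IntegrableOn f (Set.Icc a b) volume)
    (hab : a ≤ b) (hp : p ∈ Set.Icc a b) (hq : q ∈ Set.Icc a b) :
    IntervalIntegrable f volume p q := by
  apply IntegrableOn.intervalIntegrable
  apply hf.mono_set
  exact (Set.uIcc_subset_uIcc ((Set.uIcc_of_le hab).symm ▸ hp) ((Set.uIcc_of_le hab).symm ▸ hq)).trans (Set.uIcc_of_le hab).subset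

open IsUnifLocDoublingMeasure in
lemma aux_FTC_ae {a b : ℝ} {f : ℝ → ℝ} (hab : a ≤ b) (hf : IntegrableOn f (Set.Icc a b) volume) :
    ∀ᵐ x ∂(volume : Measure ℝ), x ∈ Set.Ioo a b →
      HasDerivAt (fun t => ∫ θ in a..t, f θ) (f x) x := by
  set g : ℝ → ℝ := (Set.Icc a b).indicator f with hgdef
  have hg : Integrable g volume := (integrable_indicator_iff measurableSet_Icc).2 hf
  set v := vitaliFamily (volume : Measure ℝ) 1 with hvdef
  filter_upwards [v.ae_tendsto_average_norm_sub hg.locallyIntegrable] with x hx hxIoo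
  have hxab : x ∈ Set.Icc a b := Set.Ioo_subset_Icc_self hxIoo
  have hgx : g x = f x := Set.indicator_of_mem hxab f
  have key : ∀ t ∈ Set.Icc a b, t ≠ x →
      ‖slope (fun r => ∫ θ in a..r, f θ) x t - f x‖
        ≤ ⨍ y in Set.uIcc x t, ‖g y - g x‖ := by
    intro t ht htx
    have hsub : Set.uIcc x t ⊆ Set.Icc a b := by
      exact (Set.uIcc_subset_uIcc ((Set.uIcc_of_le hab).symm ▸ hxab) ((Set.uIcc_of_le hab).symm ▸ ht)).trans (Set.uIcc_of_le hab).subset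
    have e1 : (∫ θ in a..t, f θ) - (∫ θ in a..x, f θ) = ∫ θ in x..t, f θ :=
      integral_interval_sub_left (aux_intInt hf hab ⟨le_refl a, hab⟩ ht)
        (aux_intInt hf hab ⟨le_refl a, hab⟩ hxab)
    have e2 : ∫ θ in x..t, f θ = ∫ θ in x..t, g θ :=
      intervalIntegral.integral_congr (fun y hy => (Set.indicator_of_mem (hsub hy) f).symm)
    have e3 : ∫ θ in x..t, (g θ - g x) = (∫ θ in x..t, g θ) - (t - x) * g x := by
      rw [intervalIntegral.integral_sub hg.intervalIntegrable intervalIntegrable_const,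
        intervalIntegral.integral_const, smul_eq_mul]
    have htx' : t - x ≠ 0 := sub_ne_zero.2 htx
    have e4 : slope (fun r => ∫ θ in a..r, f θ) x t - f x
        = (∫ θ in x..t, (g θ - g x)) / (t - x) := by
      rw [slope_def_field, e1, e2, e3, hgx]
      field_simp
    rw [e4]
    have e5 : ‖(∫ θ in x..t, (g θ - g x))‖ ≤ ∫ y in Set.uIcc x t, ‖g y - g x‖ := by
      refine (intervalIntegral.norm_integral_le_integral_norm_uIoc).trans ?_
      apply setIntegral_mono_set
      · refine (hg.integrableOn.sub (integrableOn_const ?_)).norm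
        rw [Real.volume_interval]; exact ENNReal.ofReal_ne_top
      · filter_upwards with y using norm_nonneg _
      · exact Filter.Eventually.of_forall Set.uIoc_subset_uIcc
    rw [setAverage_eq, smul_eq_mul]
    have hvol : volume.real (Set.uIcc x t) = |t - x| := by
      rw [measureReal_def, Real.volume_interval, ENNReal.toReal_ofReal (abs_nonneg _)]
    rw [hvol, norm_div, Real.norm_eq_abs (t-x)]
    rw [div_eq_inv_mul]
    apply mul_le_mul_of_nonneg_left e5 (by positivity) |>.trans_eq ?_
    rfl
  rw [hasDerivAt_iff_tendsto_slope, ← nhdsLT_sup_nhdsGT x, tendsto_sup]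
  constructor
  · have hl := hx.comp (Real.tendsto_Icc_vitaliFamily_left x)
    rw [← tendsto_sub_nhds_zero_iff]
    apply squeeze_zero_norm' ?_ hl
    have h1 : Set.Ioo a b ∈ 𝓝[<] x := nhdsWithin_le_nhds (Ioo_mem_nhds hxIoo.1 hxIoo.2)
    filter_upwards [h1, self_mem_nhdsWithin] with t ht htlt
    have := key t (Set.Ioo_subset_Icc_self ht) (ne_of_lt htlt)
    rwa [Set.uIcc_comm, Set.uIcc_of_le (le_of_lt htlt)] at this
  · have hr := hx.comp (Real.tendsto_Icc_vitaliFamily_right x)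
    rw [← tendsto_sub_nhds_zero_iff]
    apply squeeze_zero_norm' ?_ hr
    have h1 : Set.Ioo a b ∈ 𝓝[>] x := nhdsWithin_le_nhds (Ioo_mem_nhds hxIoo.1 hxIoo.2)
    filter_upwards [h1, self_mem_nhdsWithin] with t ht htgt
    have := key t (Set.Ioo_subset_Icc_self ht) (ne_of_gt htgt)
    rwa [Set.uIcc_of_le (le_of_lt htgt)] at this



lemma aux_id_mul_int {a b : ℝ} {f : ℝ → ℝ} (hf : IntegrableOn f (Set.Icc a b) volume) :
    IntegrableOn (fun θ => θ * f θ) (Set.Icc a b) volume := by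
  apply Integrable.bdd_mul (c := max |a| |b|) hf aestronglyMeasurable_id
  filter_upwards [ae_restrict_mem measurableSet_Icc] with θ hθ
  exact abs_le_max_abs_abs hθ.1 hθ.2

lemma aux_kernel_deriv {a b x : ℝ} {f : ℝ → ℝ} (hab : a ≤ b)
    (hf : IntegrableOn f (Set.Icc a b) volume) (hx : x ∈ Set.Ioo a b) :
    HasDerivAt (fun t => t * (∫ θ in a..t, f θ) - ∫ θ in a..t, θ * f θ)
      (∫ θ in a..x, f θ) x := by
  have hxab : x ∈ Set.Icc a b := Set.Ioo_subset_Icc_self hx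
  have haI : a ∈ Set.Icc a b := ⟨le_refl a, hab⟩
  have hθf := aux_id_mul_int hf
  have hnf : IntegrableOn (fun θ => ‖f θ‖) (Set.Icc a b) volume := hf.norm
  set N : ℝ → ℝ := fun t => ∫ θ in a..t, ‖f θ‖ with hN
  have hNcont : ContinuousAt N x := by
    have h1 : ContinuousOn N (Set.Icc a b) := by
      have := continuousOn_primitive_interval (a := a) (b := b) (μ := volume)
        (f := fun θ => ‖f θ‖) (by rwa [Set.uIcc_of_le hab])
      rwa [Set.uIcc_of_le hab] at this
    exact h1.continuousAt (Icc_mem_nhds hx.1 hx.2)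
  rw [hasDerivAt_iff_tendsto_slope, ← tendsto_sub_nhds_zero_iff]
  have hlim : Tendsto (fun t => |N t - N x|) (𝓝[≠] x) (𝓝 0) := by
    have := ((hNcont.tendsto.sub_const (N x)).abs).mono_left (nhdsWithin_le_nhds (s := {x}ᶜ))
    simpa using this
  apply squeeze_zero_norm' ?_ hlim
  have h1 : Set.Ioo a b ∈ 𝓝[≠] x := nhdsWithin_le_nhds (Ioo_mem_nhds hx.1 hx.2)
  filter_upwards [h1, self_mem_nhdsWithin] with t ht htne
  have htx : t ≠ x := htne
  have htx' : t - x ≠ 0 := sub_ne_zero.2 htx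
  have htab : t ∈ Set.Icc a b := Set.Ioo_subset_Icc_self ht
  have hfat : IntervalIntegrable f volume a t := aux_intInt hf hab haI htab
  have hfax : IntervalIntegrable f volume a x := aux_intInt hf hab haI hxab
  have hfxt : IntervalIntegrable f volume x t := aux_intInt hf hab hxab htab
  have hgat : IntervalIntegrable (fun θ => θ * f θ) volume a t := aux_intInt hθf hab haI htab
  have hgax : IntervalIntegrable (fun θ => θ * f θ) volume a x := aux_intInt hθf hab haI hxab
  have hgxt : IntervalIntegrable (fun θ => θ * f θ) volume x t := aux_intInt hθf hab hxab htab
  have hnat : IntervalIntegrable (fun θ => ‖f θ‖) volume a t := aux_intInt hnf hab haI htab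
  have hnax : IntervalIntegrable (fun θ => ‖f θ‖) volume a x := aux_intInt hnf hab haI hxab
  have e1 : (∫ θ in a..t, f θ) - (∫ θ in a..x, f θ) = ∫ θ in x..t, f θ :=
    integral_interval_sub_left hfat hfax
  have e1' : (∫ θ in a..t, θ * f θ) - (∫ θ in a..x, θ * f θ) = ∫ θ in x..t, θ * f θ :=
    integral_interval_sub_left hgat hgax
  have e0 : ∫ θ in x..t, (t - θ) * f θ = t * (∫ θ in x..t, f θ) - ∫ θ in x..t, θ * f θ := by
    rw [← intervalIntegral.integral_const_mul, ← intervalIntegral.integral_sub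
      (hfxt.const_mul t) hgxt]
    congr 1; ext θ; ring
  have e2 : slope (fun t => t * (∫ θ in a..t, f θ) - ∫ θ in a..t, θ * f θ) x t
      - (∫ θ in a..x, f θ) = (∫ θ in x..t, (t - θ) * f θ) / (t - x) := by
    rw [slope_def_field, e0]
    have : t * (∫ θ in a..t, f θ) - (∫ θ in a..t, θ * f θ)
        - (x * (∫ θ in a..x, f θ) - ∫ θ in a..x, θ * f θ)
        = t * (∫ θ in x..t, f θ) - (∫ θ in x..t, θ * f θ) + (t - x) * (∫ θ in a..x, f θ) := by
      rw [← e1, ← e1']; ring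
    rw [this]; field_simp; ring
  rw [e2]
  have e3 : ‖∫ θ in x..t, (t - θ) * f θ‖ ≤ |t - x| * ∫ θ in Ι x t, ‖f θ‖ := by
    refine (intervalIntegral.norm_integral_le_integral_norm_uIoc).trans ?_
    rw [← MeasureTheory.integral_const_mul]
    have hsub : Ι x t ⊆ Set.Icc a b :=
      Set.uIoc_subset_uIcc.trans ((Set.uIcc_subset_uIcc ((Set.uIcc_of_le hab).symm ▸ hxab) ((Set.uIcc_of_le hab).symm ▸ htab)).trans (Set.uIcc_of_le hab).subset)
    have hbd : IntegrableOn (fun θ => (t - θ) * f θ) (Set.Icc a b) volume := by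
      apply Integrable.bdd_mul (c := |t| + max |a| |b|) hf
      · exact (continuous_const.sub continuous_id).aestronglyMeasurable
      · filter_upwards [ae_restrict_mem measurableSet_Icc] with θ hθ
        have hq0 : |t - θ| ≤ |t| + |θ| := abs_sub _ _
        have h2 : |θ| ≤ max |a| |b| := abs_le_max_abs_abs hθ.1 hθ.2
        simp only [Real.norm_eq_abs]; linarith
    apply setIntegral_mono_on
    · exact (hbd.mono_set hsub).norm
    · exact (hnf.mono_set hsub).const_mul _
    · exact measurableSet_uIoc
    · intro θ hθ
      have h3 : |t - θ| ≤ |t - x| := by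
        rcases hθ with ⟨h4, h5⟩
        rcases le_total x t with h | h
        · have h4' : x < θ := by simpa [min_eq_left h] using h4
          have h5' : θ ≤ t := by simpa [max_eq_right h] using h5
          rw [abs_of_nonneg (by linarith : (0:ℝ) ≤ t - θ), abs_of_nonneg (by linarith : (0:ℝ) ≤ t - x)]
          linarith
        · have h4' : t < θ := by simpa [min_eq_right h] using h4
          have h5' : θ ≤ x := by simpa [max_eq_left h] using h5
          rw [abs_of_nonpos (by linarith : t - θ ≤ (0:ℝ)), abs_of_nonpos (by linarith : t - x ≤ (0:ℝ))]
          linarith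
      calc ‖(t - θ) * f θ‖ = |t - θ| * ‖f θ‖ := by
            simp [Real.norm_eq_abs, abs_mul]
        _ ≤ |t - x| * ‖f θ‖ := by
            apply mul_le_mul_of_nonneg_right h3 (norm_nonneg _)
  have e4 : ∫ θ in Ι x t, ‖f θ‖ = |N t - N x| := by
    have : N t - N x = ∫ θ in x..t, ‖f θ‖ := integral_interval_sub_left hnat hnax
    rw [this]
    rcases le_total x t with h | h
    · rw [Set.uIoc_of_le h, intervalIntegral.integral_of_le h,
        abs_of_nonneg (setIntegral_nonneg measurableSet_Ioc (fun θ _ => norm_nonneg _))]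
    · rw [Set.uIoc_comm, Set.uIoc_of_le h, intervalIntegral.integral_symm,
        intervalIntegral.integral_of_le h, abs_neg,
        abs_of_nonneg (setIntegral_nonneg measurableSet_Ioc (fun θ _ => norm_nonneg _))]
  rw [norm_div, Real.norm_eq_abs (t - x), div_le_iff₀ (by positivity)]
  calc ‖∫ θ in x..t, (t - θ) * f θ‖ ≤ |t - x| * ∫ θ in Ι x t, ‖f θ‖ := e3
    _ = |N t - N x| * |t - x| := by rw [e4]; ring


namespace PIEpaper
variable {a b : ℝ} {n0 n1 n2 : ℕ}
variable {B : Matrix (Ic n1 n2) (Ic n1 n2 ⊕ Ic n1 n2) ℝ}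
variable {B_I : ℝ → Matrix (Ic n1 n2) (ID n0 n1 n2) ℝ}

lemma T1_mul_inl {κ : Type*} [Fintype κ] (η : ℝ) (M : Matrix (Ic n1 n2) κ ℝ) (i : Fin n1) (j : κ) :
    (T1mat n1 n2 η * M) (Sum.inl i) j = M (Sum.inl i) j := by
  rw [Matrix.mul_apply]
  simp [T1mat, Tmat, emb12, Fintype.sum_sum_type, ite_mul, Finset.sum_ite_eq]

lemma T1_mul_inr {κ : Type*} [Fintype κ] (η : ℝ) (M : Matrix (Ic n1 n2) κ ℝ) (k : Fin n2) (j : κ) :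
    (T1mat n1 n2 η * M) (Sum.inr k) j
      = M (Sum.inr (Sum.inl k)) j + η * M (Sum.inr (Sum.inr k)) j := by
  rw [Matrix.mul_apply]
  simp [T1mat, Tmat, emb12, Fintype.sum_sum_type, ite_mul, Finset.sum_ite_eq]

lemma Qrow_inl (η : ℝ) (w : Ix n0 n1 n2 → ℝ) (i : Fin n1) :
    (∑ j, Qmat n0 n1 n2 η (Sum.inl i) j * w j) = w (Sum.inr (Sum.inl i)) := by
  simp [Qmat, Fintype.sum_sum_type, ite_mul, Finset.sum_ite_eq]

lemma Qrow_inr (η : ℝ) (w : Ix n0 n1 n2 → ℝ) (k : Fin n2) :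
    (∑ j, Qmat n0 n1 n2 η (Sum.inr (Sum.inl k)) j * w j) = η * w (Sum.inr (Sum.inr k)) := by
  simp [Qmat, Fintype.sum_sum_type, ite_mul, Finset.sum_ite_eq]

lemma G0_mulVec_inl (w : Ix n0 n1 n2 → ℝ) (i : Fin n0) :
    (G0 n0 n1 n2).mulVec w (Sum.inl i) = w (Sum.inl i) := by
  simp [G0, Matrix.mulVec, dotProduct, Fintype.sum_sum_type, ite_mul, Finset.sum_ite_eq]

lemma G0_mulVec_inr (w : Ix n0 n1 n2 → ℝ) (i : Fin n1 ⊕ Fin n2) :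
    (G0 n0 n1 n2).mulVec w (Sum.inr i) = 0 := by
  cases i <;> simp [G0, Matrix.mulVec, dotProduct, Fintype.sum_sum_type]

lemma G2_mulVec_inl (s θ : ℝ) (w : Ix n0 n1 n2 → ℝ) (i : Fin n0) :
    (G2 a b n0 n1 n2 B B_I s θ).mulVec w (Sum.inl i) = 0 := by
  simp [G2, Matrix.mulVec, dotProduct]

lemma G1_mulVec_inl (s θ : ℝ) (w : Ix n0 n1 n2 → ℝ) (i : Fin n0) :
    (G1 a b n0 n1 n2 B B_I s θ).mulVec w (Sum.inl i) = 0 := by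
  simp [G1, G2, Matrix.mulVec, dotProduct]

lemma G2_mulVec_n1 (s θ : ℝ) (w : Ix n0 n1 n2 → ℝ) (i : Fin n1) :
    (G2 a b n0 n1 n2 B B_I s θ).mulVec w (Sum.inr (Sum.inl i))
      = (BQ a b n0 n1 n2 B B_I θ).mulVec w (Sum.inl i) := by
  simp [G2, Matrix.mulVec, dotProduct, T1_mul_inl]

lemma G2_mulVec_n2 (s θ : ℝ) (w : Ix n0 n1 n2 → ℝ) (k : Fin n2) :
    (G2 a b n0 n1 n2 B B_I s θ).mulVec w (Sum.inr (Sum.inr k))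
      = (BQ a b n0 n1 n2 B B_I θ).mulVec w (Sum.inr (Sum.inl k))
        + (s - a) * (BQ a b n0 n1 n2 B B_I θ).mulVec w (Sum.inr (Sum.inr k)) := by
  simp only [G2, Matrix.mulVec, dotProduct, Matrix.of_apply, T1_mul_inr, add_mul, mul_assoc]
  rw [Finset.sum_add_distrib, ← Finset.mul_sum]

lemma G1_mulVec_n1 (s θ : ℝ) (w : Ix n0 n1 n2 → ℝ) (i : Fin n1) :
    (G1 a b n0 n1 n2 B B_I s θ).mulVec w (Sum.inr (Sum.inl i))
      = w (Sum.inr (Sum.inl i)) + (BQ a b n0 n1 n2 B B_I θ).mulVec w (Sum.inl i) := by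
  have h2 := G2_mulVec_n1 (a := a) (b := b) (B := B) (B_I := B_I) s θ w i
  simp only [G1, Matrix.mulVec, dotProduct, Matrix.add_apply, Matrix.of_apply, add_mul,
    Finset.sum_add_distrib] at *
  rw [h2]
  congr 1
  simpa [Q1mat, emb12] using Qrow_inl (n0 := n0) (s - θ) w i

lemma G1_mulVec_n2 (s θ : ℝ) (w : Ix n0 n1 n2 → ℝ) (k : Fin n2) :
    (G1 a b n0 n1 n2 B B_I s θ).mulVec w (Sum.inr (Sum.inr k))
      = (s - θ) * w (Sum.inr (Sum.inr k))
        + ((BQ a b n0 n1 n2 B B_I θ).mulVec w (Sum.inr (Sum.inl k))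
          + (s - a) * (BQ a b n0 n1 n2 B B_I θ).mulVec w (Sum.inr (Sum.inr k))) := by
  have h2 := G2_mulVec_n2 (a := a) (b := b) (B := B) (B_I := B_I) s θ w k
  simp only [G1, Matrix.mulVec, dotProduct, Matrix.add_apply, Matrix.of_apply, add_mul,
    Finset.sum_add_distrib] at *
  rw [h2]
  congr 1
  simpa [Q1mat, emb12] using Qrow_inr (n0 := n0) (s - θ) w k





end PIEpaper
namespace PIEpaper

instance μab_finite (a b : ℝ) : IsFiniteMeasure (μab a b) := by
  unfold μab; infer_instance

variable {a b : ℝ} {n0 n1 n2 : ℕ}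
variable {B : Matrix (Ic n1 n2) (Ic n1 n2 ⊕ Ic n1 n2) ℝ}
variable {B_I : ℝ → Matrix (Ic n1 n2) (ID n0 n1 n2) ℝ}


lemma aux_memLp_mul_const {μ : Measure ℝ} {f : ℝ → ℝ} (hf : MemLp f 2 μ) (c : ℝ) :
    MemLp (fun x => f x * c) 2 μ := by
  simpa [mul_comm] using hf.const_mul c



lemma aux_contOn_memLp {f : ℝ → ℝ} (hf : ContinuousOn f (Set.Icc a b)) :
    MemLp f 2 (μab a b) := by
  obtain ⟨C, hC⟩ := isCompact_Icc.exists_bound_of_continuousOn hf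
  refine MemLp.of_bound (hf.aestronglyMeasurable measurableSet_Icc) C ?_
  filter_upwards [ae_restrict_mem measurableSet_Icc] with s hs using hC s hs

lemma Qmat_affine (η : ℝ) (i : Ic n1 n2) (j : Ix n0 n1 n2) :
    Qmat n0 n1 n2 η i j
      = Qmat n0 n1 n2 0 i j + η * (Qmat n0 n1 n2 1 i j - Qmat n0 n1 n2 0 i j) := by
  rcases i with i | i | i <;> rcases j with j | j | j <;>
    simp [Qmat] <;> split_ifs <;> ring

lemma BI_entry_memLp (hBI : SqIntMat a b B_I) (i : Ic n1 n2) (j : ID n0 n1 n2) :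
    MemLp (fun s => B_I s i j) 2 (μab a b) := hBI.2 i j

lemma BQ_memLp (hab : a ≤ b) (hBI : SqIntMat a b B_I) (i : Ic n1 n2) (j : Ix n0 n1 n2) :
    MemLp (fun s => BQ a b n0 n1 n2 B B_I s i j) 2 (μab a b) := by
  -- entry of the inner matrix
  have inner_memLp : ∀ (k : Ic n1 n2),
      MemLp (fun s => (B_I s * U1 n0 n1 n2 - B * Qstack n0 n1 n2 (b - s) +
        Matrix.of fun i j => ∫ θ in s..b, (B_I θ * U2 n0 n1 n2 * Qmat n0 n1 n2 (θ - s)) i j)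
          k j) 2 (μab a b) := by
    intro k
    have h1 : MemLp (fun s => (B_I s * U1 n0 n1 n2) k j) 2 (μab a b) := by
      simp only [Matrix.mul_apply]
      exact memLp_finset_sum _ (fun l _ => aux_memLp_mul_const (hBI.2 k l) _)
    have h2 : MemLp (fun s => (B * Qstack n0 n1 n2 (b - s)) k j) 2 (μab a b) := by
      apply aux_contOn_memLp
      apply Continuous.continuousOn
      simp only [Matrix.mul_apply]
      apply continuous_finset_sum
      intro l _
      apply Continuous.mul continuous_const
      rcases l with l | l
      · simp [Qstack]; exact continuous_const
      · have : (fun s => Qstack n0 n1 n2 (b - s) (Sum.inr l) j)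
            = fun s => Qmat n0 n1 n2 0 l j
              + (b - s) * (Qmat n0 n1 n2 1 l j - Qmat n0 n1 n2 0 l j) := by
          funext s; rw [show Qstack n0 n1 n2 (b-s) (Sum.inr l) j = Qmat n0 n1 n2 (b-s) l j from rfl,
            Qmat_affine]
        rw [this]; fun_prop
    have h3 : MemLp (fun s =>
        (Matrix.of fun i j => ∫ θ in s..b, (B_I θ * U2 n0 n1 n2 * Qmat n0 n1 n2 (θ - s)) i j)
          k j) 2 (μab a b) := by
      set g0 : ℝ → ℝ := fun θ => (B_I θ * U2 n0 n1 n2 * Qmat n0 n1 n2 0) k j with hg0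
      set g1 : ℝ → ℝ := fun θ =>
        (B_I θ * U2 n0 n1 n2 * Qmat n0 n1 n2 1) k j - g0 θ with hg1
      have hg0m : MemLp g0 2 (μab a b) := by
        rw [hg0]; simp only [Matrix.mul_apply]
        exact memLp_finset_sum _ (fun l _ =>
          aux_memLp_mul_const (memLp_finset_sum _ (fun m _ => aux_memLp_mul_const (hBI.2 k m) _)) _)
      have hg1m : MemLp g1 2 (μab a b) := by
        rw [hg1]
        apply MemLp.sub ?_ hg0m
        simp only [Matrix.mul_apply]
        exact memLp_finset_sum _ (fun l _ =>
          aux_memLp_mul_const (memLp_finset_sum _ (fun m _ => aux_memLp_mul_const (hBI.2 k m) _)) _)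
      have hint : ∀ (s θ : ℝ),
          (B_I θ * U2 n0 n1 n2 * Qmat n0 n1 n2 (θ - s)) k j
            = (g0 θ + θ * g1 θ) - s * g1 θ := by
        intro s θ
        simp only [hg1, hg0, Matrix.mul_apply]
        have h1 : ∑ x : Ic n1 n2, (∑ m, B_I θ k m * U2 n0 n1 n2 m x) * Qmat n0 n1 n2 (θ - s) x j
            = ∑ x : Ic n1 n2, ((∑ m, B_I θ k m * U2 n0 n1 n2 m x) * Qmat n0 n1 n2 0 x j
                + ((θ - s) * ((∑ m, B_I θ k m * U2 n0 n1 n2 m x) * Qmat n0 n1 n2 1 x j)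
                  - (θ - s) * ((∑ m, B_I θ k m * U2 n0 n1 n2 m x) * Qmat n0 n1 n2 0 x j))) :=
          Finset.sum_congr rfl (fun x _ => by rw [Qmat_affine (θ - s) x j]; ring)
        rw [h1, Finset.sum_add_distrib, Finset.sum_sub_distrib, ← Finset.mul_sum, ← Finset.mul_sum]
        ring
      -- integrability of g0, g1 on Icc
      have hg0i : IntegrableOn g0 (Set.Icc a b) volume := hg0m.integrable (by norm_num)
      have hg1i : IntegrableOn g1 (Set.Icc a b) volume := hg1m.integrable (by norm_num)
      have hg2i : IntegrableOn (fun θ => g0 θ + θ * g1 θ) (Set.Icc a b) volume :=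
        hg0i.add (_root_.aux_id_mul_int hg1i)
      set φ : ℝ → ℝ := fun s =>
        ((∫ θ in a..b, (g0 θ + θ * g1 θ)) - ∫ θ in a..s, (g0 θ + θ * g1 θ))
          - s * ((∫ θ in a..b, g1 θ) - ∫ θ in a..s, g1 θ) with hφ
      have hφcont : ContinuousOn φ (Set.Icc a b) := by
        have c1 : ContinuousOn (fun s => ∫ θ in a..s, (g0 θ + θ * g1 θ)) (Set.Icc a b) := by
          have := continuousOn_primitive_interval (a := a) (b := b) (μ := volume)
            (f := fun θ => g0 θ + θ * g1 θ) (by rwa [Set.uIcc_of_le hab])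
          rwa [Set.uIcc_of_le hab] at this
        have c2 : ContinuousOn (fun s => ∫ θ in a..s, g1 θ) (Set.Icc a b) := by
          have := continuousOn_primitive_interval (a := a) (b := b) (μ := volume)
            (f := g1) (by rwa [Set.uIcc_of_le hab])
          rwa [Set.uIcc_of_le hab] at this
        exact (continuousOn_const.sub c1).sub
          ((continuousOn_id.mul (continuousOn_const.sub c2)))
      have hφeq : ∀ s ∈ Set.Icc a b,
          (Matrix.of fun i j => ∫ θ in s..b, (B_I θ * U2 n0 n1 n2 * Qmat n0 n1 n2 (θ - s)) i j)
            k j = φ s := by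
        intro s hs
        have haI : a ∈ Set.Icc a b := ⟨le_refl a, hab⟩
        have hbI : b ∈ Set.Icc a b := ⟨hab, le_refl b⟩
        have i2 : IntervalIntegrable (fun θ => g0 θ + θ * g1 θ) volume s b :=
          _root_.aux_intInt hg2i hab hs hbI
        have i1 : IntervalIntegrable g1 volume s b := _root_.aux_intInt hg1i hab hs hbI
        show (∫ θ in s..b, (B_I θ * U2 n0 n1 n2 * Qmat n0 n1 n2 (θ - s)) k j) = φ s
        calc (∫ θ in s..b, (B_I θ * U2 n0 n1 n2 * Qmat n0 n1 n2 (θ - s)) k j)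
            = ∫ θ in s..b, ((g0 θ + θ * g1 θ) - s * g1 θ) := by
              apply intervalIntegral.integral_congr; intro θ _; exact hint s θ
          _ = (∫ θ in s..b, (g0 θ + θ * g1 θ)) - s * ∫ θ in s..b, g1 θ := by
              rw [intervalIntegral.integral_sub i2 (i1.const_mul s),
                intervalIntegral.integral_const_mul]
          _ = φ s := by
              rw [hφ]
              rw [← integral_interval_sub_left (_root_.aux_intInt hg2i hab haI hbI)
                (_root_.aux_intInt hg2i hab haI hs),
                ← integral_interval_sub_left (_root_.aux_intInt hg1i hab haI hbI)
                (_root_.aux_intInt hg1i hab haI hs)]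
      apply (aux_contOn_memLp hφcont).ae_eq
      filter_upwards [ae_restrict_mem measurableSet_Icc] with s hs
      exact (hφeq s hs).symm
    exact (h1.sub h2).add h3
  -- now the BQ entry
  simp only [BQ, Matrix.mul_apply]
  exact memLp_finset_sum _ (fun k _ => (inner_memLp k).const_mul _)



end PIEpaper


namespace PIEpaper
variable {a b : ℝ} {n0 n1 n2 : ℕ}
variable {B : Matrix (Ic n1 n2) (Ic n1 n2 ⊕ Ic n1 n2) ℝ}
variable {B_I : ℝ → Matrix (Ic n1 n2) (ID n0 n1 n2) ℝ}

lemma memLp_intOn {f : ℝ → ℝ} (h : MemLp f 2 (μab a b)) :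
    IntegrableOn f (Set.Icc a b) volume := h.integrable one_le_two

lemma cBQ_int (hab : a ≤ b) (hBI : SqIntMat a b B_I) {v : ℝ → Ix n0 n1 n2 → ℝ}
    (hv : MemLp v 2 (μab a b)) (j : Ic n1 n2) :
    IntegrableOn (fun θ => (BQ a b n0 n1 n2 B B_I θ).mulVec (v θ) j) (Set.Icc a b) volume := by
  have : Integrable (fun θ => (BQ a b n0 n1 n2 B B_I θ).mulVec (v θ) j) (μab a b) := by
    simp only [Matrix.mulVec, dotProduct]
    exact integrable_finset_sum _ (fun k _ =>
      aux_mul_int (BQ_memLp hab hBI j k) (aux_memLp_eval hv k))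
  exact this

lemma Tfun_inl (v : ℝ → Ix n0 n1 n2 → ℝ) (s : ℝ) (i : Fin n0) :
    Tfun a b n0 n1 n2 B B_I v s (Sum.inl i) = v s (Sum.inl i) := by
  simp only [Tfun, G0_mulVec_inl, G1_mulVec_inl, G2_mulVec_inl,
    intervalIntegral.integral_zero, add_zero]

lemma Tfun_n1 (hab : a ≤ b) (hBI : SqIntMat a b B_I) {v : ℝ → Ix n0 n1 n2 → ℝ}
    (hv : MemLp v 2 (μab a b)) {s : ℝ} (hs : s ∈ Set.Icc a b) (i : Fin n1) :
    Tfun a b n0 n1 n2 B B_I v s (Sum.inr (Sum.inl i))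
      = (∫ θ in a..s, v θ (Sum.inr (Sum.inl i)))
        + ∫ θ in a..b, (BQ a b n0 n1 n2 B B_I θ).mulVec (v θ) (Sum.inl i) := by
  have haI : a ∈ Set.Icc a b := ⟨le_rfl, hab⟩
  have hbI : b ∈ Set.Icc a b := ⟨hab, le_rfl⟩
  have hf1 : IntegrableOn (fun θ => v θ (Sum.inr (Sum.inl i))) (Set.Icc a b) volume :=
    memLp_intOn (aux_memLp_eval hv _)
  have hc := cBQ_int hab hBI hv (Sum.inl i) (B := B)
  simp only [Tfun, G0_mulVec_inr, G1_mulVec_n1, G2_mulVec_n1, zero_add]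
  rw [intervalIntegral.integral_add (aux_intInt hf1 hab haI hs) (aux_intInt hc hab haI hs),
    add_assoc]
  congr 1
  exact integral_add_adjacent_intervals (aux_intInt hc hab haI hs) (aux_intInt hc hab hs hbI)

lemma Tfun_n2 (hab : a ≤ b) (hBI : SqIntMat a b B_I) {v : ℝ → Ix n0 n1 n2 → ℝ}
    (hv : MemLp v 2 (μab a b)) {s : ℝ} (hs : s ∈ Set.Icc a b) (k : Fin n2) :
    Tfun a b n0 n1 n2 B B_I v s (Sum.inr (Sum.inr k))
      = (s * (∫ θ in a..s, v θ (Sum.inr (Sum.inr k)))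
          - ∫ θ in a..s, θ * v θ (Sum.inr (Sum.inr k)))
        + ((∫ θ in a..b, (BQ a b n0 n1 n2 B B_I θ).mulVec (v θ) (Sum.inr (Sum.inl k)))
          + (s - a) * ∫ θ in a..b, (BQ a b n0 n1 n2 B B_I θ).mulVec (v θ) (Sum.inr (Sum.inr k))) := by
  have haI : a ∈ Set.Icc a b := ⟨le_rfl, hab⟩
  have hbI : b ∈ Set.Icc a b := ⟨hab, le_rfl⟩
  have hf2 : IntegrableOn (fun θ => v θ (Sum.inr (Sum.inr k))) (Set.Icc a b) volume :=
    memLp_intOn (aux_memLp_eval hv _)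
  have hθf2 := aux_id_mul_int hf2
  have hc1 := cBQ_int hab hBI hv (Sum.inr (Sum.inl k)) (B := B)
  have hc2 := cBQ_int hab hBI hv (Sum.inr (Sum.inr k)) (B := B)
  have hcc : IntegrableOn (fun θ => (BQ a b n0 n1 n2 B B_I θ).mulVec (v θ) (Sum.inr (Sum.inl k))
      + (s - a) * (BQ a b n0 n1 n2 B B_I θ).mulVec (v θ) (Sum.inr (Sum.inr k)))
      (Set.Icc a b) volume := hc1.add (hc2.const_mul _)
  have hks : IntegrableOn (fun θ => (s - θ) * v θ (Sum.inr (Sum.inr k))) (Set.Icc a b) volume := by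
    have : (fun θ => (s - θ) * v θ (Sum.inr (Sum.inr k)))
        = fun θ => s * v θ (Sum.inr (Sum.inr k)) - θ * v θ (Sum.inr (Sum.inr k)) := by
      funext θ; ring
    rw [this]; exact (hf2.const_mul s).sub hθf2
  simp only [Tfun, G0_mulVec_inr, G1_mulVec_n2, G2_mulVec_n2, zero_add]
  rw [intervalIntegral.integral_add (aux_intInt hks hab haI hs) (aux_intInt hcc hab haI hs)]
  have e1 : ∫ θ in a..s, (s - θ) * v θ (Sum.inr (Sum.inr k))
      = s * (∫ θ in a..s, v θ (Sum.inr (Sum.inr k)))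
        - ∫ θ in a..s, θ * v θ (Sum.inr (Sum.inr k)) := by
    rw [← intervalIntegral.integral_const_mul, ← intervalIntegral.integral_sub
      ((aux_intInt hf2 hab haI hs).const_mul s) (aux_intInt hθf2 hab haI hs)]
    apply intervalIntegral.integral_congr; intro θ _; ring
  have e2 : (∫ θ in a..s, ((BQ a b n0 n1 n2 B B_I θ).mulVec (v θ) (Sum.inr (Sum.inl k))
        + (s - a) * (BQ a b n0 n1 n2 B B_I θ).mulVec (v θ) (Sum.inr (Sum.inr k))))
      + (∫ θ in s..b, ((BQ a b n0 n1 n2 B B_I θ).mulVec (v θ) (Sum.inr (Sum.inl k))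
        + (s - a) * (BQ a b n0 n1 n2 B B_I θ).mulVec (v θ) (Sum.inr (Sum.inr k))))
      = (∫ θ in a..b, (BQ a b n0 n1 n2 B B_I θ).mulVec (v θ) (Sum.inr (Sum.inl k)))
        + (s - a) * ∫ θ in a..b, (BQ a b n0 n1 n2 B B_I θ).mulVec (v θ) (Sum.inr (Sum.inr k)) := by
    rw [integral_add_adjacent_intervals (aux_intInt hcc hab haI hs) (aux_intInt hcc hab hs hbI),
      intervalIntegral.integral_add (aux_intInt hc1 hab haI hbI)
        ((aux_intInt hc2 hab haI hbI).const_mul _),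
      intervalIntegral.integral_const_mul]
  rw [e1, add_assoc, e2]

lemma deriv_n1_ae (hab : a ≤ b) (hBI : SqIntMat a b B_I) {v : ℝ → Ix n0 n1 n2 → ℝ}
    (hv : MemLp v 2 (μab a b)) :
    ∀ᵐ s ∂(volume : Measure ℝ), ∀ i : Fin n1, s ∈ Set.Ioo a b →
      deriv (fun t => Tfun a b n0 n1 n2 B B_I v t (Sum.inr (Sum.inl i))) s
        = v s (Sum.inr (Sum.inl i)) := by
  rw [ae_all_iff]
  intro i
  have hf1 : IntegrableOn (fun θ => v θ (Sum.inr (Sum.inl i))) (Set.Icc a b) volume :=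
    memLp_intOn (aux_memLp_eval hv _)
  filter_upwards [aux_FTC_ae hab hf1] with s hs hsIoo
  have hF := hs hsIoo
  have heq : (fun t => Tfun a b n0 n1 n2 B B_I v t (Sum.inr (Sum.inl i)))
      =ᶠ[𝓝 s] (fun t => (∫ θ in a..t, v θ (Sum.inr (Sum.inl i)))
        + ∫ θ in a..b, (BQ a b n0 n1 n2 B B_I θ).mulVec (v θ) (Sum.inl i)) := by
    filter_upwards [Ioo_mem_nhds hsIoo.1 hsIoo.2] with t ht
    exact Tfun_n1 hab hBI hv (Set.Ioo_subset_Icc_self ht) i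
  rw [heq.deriv_eq]
  exact (hF.add_const _).deriv

lemma deriv2_n2_ae (hab : a ≤ b) (hBI : SqIntMat a b B_I) {v : ℝ → Ix n0 n1 n2 → ℝ}
    (hv : MemLp v 2 (μab a b)) :
    ∀ᵐ s ∂(volume : Measure ℝ), ∀ k : Fin n2, s ∈ Set.Ioo a b →
      deriv (deriv (fun t => Tfun a b n0 n1 n2 B B_I v t (Sum.inr (Sum.inr k)))) s
        = v s (Sum.inr (Sum.inr k)) := by
  rw [ae_all_iff]
  intro k
  have hf2 : IntegrableOn (fun θ => v θ (Sum.inr (Sum.inr k))) (Set.Icc a b) volume :=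
    memLp_intOn (aux_memLp_eval hv _)
  have step1 : ∀ t ∈ Set.Ioo a b,
      HasDerivAt (fun r => Tfun a b n0 n1 n2 B B_I v r (Sum.inr (Sum.inr k)))
        ((∫ θ in a..t, v θ (Sum.inr (Sum.inr k)))
          + ∫ θ in a..b, (BQ a b n0 n1 n2 B B_I θ).mulVec (v θ) (Sum.inr (Sum.inr k))) t := by
    intro t ht
    have hker := aux_kernel_deriv hab hf2 ht
    have haff : HasDerivAt (fun r =>
        (∫ θ in a..b, (BQ a b n0 n1 n2 B B_I θ).mulVec (v θ) (Sum.inr (Sum.inl k)))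
          + (r - a) * ∫ θ in a..b, (BQ a b n0 n1 n2 B B_I θ).mulVec (v θ) (Sum.inr (Sum.inr k)))
        (∫ θ in a..b, (BQ a b n0 n1 n2 B B_I θ).mulVec (v θ) (Sum.inr (Sum.inr k))) t := by
      simpa using ((((hasDerivAt_id t).sub_const a).mul_const
        (∫ θ in a..b, (BQ a b n0 n1 n2 B B_I θ).mulVec (v θ) (Sum.inr (Sum.inr k)))).const_add
        (∫ θ in a..b, (BQ a b n0 n1 n2 B B_I θ).mulVec (v θ) (Sum.inr (Sum.inl k))))
    have hsum := hker.add haff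
    apply hsum.congr_of_eventuallyEq
    filter_upwards [Ioo_mem_nhds ht.1 ht.2] with r hr
    exact Tfun_n2 hab hBI hv (Set.Ioo_subset_Icc_self hr) k
  filter_upwards [aux_FTC_ae hab hf2] with s hs hsIoo
  have h1 : deriv (fun r => Tfun a b n0 n1 n2 B B_I v r (Sum.inr (Sum.inr k)))
      =ᶠ[𝓝 s] (fun t => (∫ θ in a..t, v θ (Sum.inr (Sum.inr k)))
        + ∫ θ in a..b, (BQ a b n0 n1 n2 B B_I θ).mulVec (v θ) (Sum.inr (Sum.inr k))) := by
    filter_upwards [Ioo_mem_nhds hsIoo.1 hsIoo.2] with t ht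
    exact (step1 t ht).deriv
  rw [h1.deriv_eq]
  exact ((hs hsIoo).add_const _).deriv

end PIEpaper


namespace PIEpaper

/-- `𝒯` is unitary. If `{(n0,n1,n2), B, B_I}` is admissible, then for
all `x, y ∈ L2^{n_x}`, `⟨𝒯x, 𝒯y⟩_X = ⟨x, y⟩_{L2}`. -/
theorem T_unitary (a b : ℝ) (hab : a < b) (n0 n1 n2 : ℕ)
    (B : Matrix (Ic n1 n2) (Ic n1 n2 ⊕ Ic n1 n2) ℝ)
    (B_I : ℝ → Matrix (Ic n1 n2) (ID n0 n1 n2) ℝ)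
    (hBI : SqIntMat a b B_I)
    (hadm : Admissible a b n0 n1 n2 B B_I)
    (x y : ℝ → Ix n0 n1 n2 → ℝ)
    (hxmeas : Measurable x) (hx : MemLp x 2 (μab a b))
    (hymeas : Measurable y) (hy : MemLp y 2 (μab a b)) :
    XinnerF a b n0 n1 n2 (Tfun a b n0 n1 n2 B B_I x) (Tfun a b n0 n1 n2 B B_I y)
      = L2inner a b x y := by
  have hab' : a ≤ b := le_of_lt hab
  have haI : a ∈ Set.Icc a b := ⟨le_rfl, hab'⟩
  have hbI : b ∈ Set.Icc a b := ⟨hab', le_rfl⟩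
  have hIoo : ∀ᵐ s ∂(volume : Measure ℝ), s ∈ Ι a b → s ∈ Set.Ioo a b := by
    have hbne : ∀ᵐ s ∂(volume : Measure ℝ), s ≠ b := by
      have h1 : {s : ℝ | ¬ s ≠ b} = {b} := by ext; simp
      rw [ae_iff, h1]; exact measure_singleton b
    filter_upwards [hbne] with s hsb hsI
    rw [Set.uIoc_of_le hab'] at hsI
    exact ⟨hsI.1, lt_of_le_of_ne hsI.2 hsb⟩
  simp only [XinnerF, L2inner]
  have h0 : (∫ s in a..b, ∑ i : Fin n0,
        Tfun a b n0 n1 n2 B B_I x s (Sum.inl i) * Tfun a b n0 n1 n2 B B_I y s (Sum.inl i))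
      = ∫ s in a..b, ∑ i : Fin n0, x s (Sum.inl i) * y s (Sum.inl i) := by
    apply intervalIntegral.integral_congr
    intro s _
    exact Finset.sum_congr rfl fun i _ => by rw [Tfun_inl, Tfun_inl]
  have h1 : (∫ s in a..b, ∑ i : Fin n1,
        deriv (fun t => Tfun a b n0 n1 n2 B B_I x t (Sum.inr (Sum.inl i))) s *
        deriv (fun t => Tfun a b n0 n1 n2 B B_I y t (Sum.inr (Sum.inl i))) s)
      = ∫ s in a..b, ∑ i : Fin n1, x s (Sum.inr (Sum.inl i)) * y s (Sum.inr (Sum.inl i)) := by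
    apply intervalIntegral.integral_congr_ae
    filter_upwards [deriv_n1_ae hab' hBI hx (B := B), deriv_n1_ae hab' hBI hy (B := B), hIoo]
      with s hdx hdy hIo hs
    exact Finset.sum_congr rfl fun i _ => by rw [hdx i (hIo hs), hdy i (hIo hs)]
  have h2 : (∫ s in a..b, ∑ i : Fin n2,
        deriv (deriv (fun t => Tfun a b n0 n1 n2 B B_I x t (Sum.inr (Sum.inr i)))) s *
        deriv (deriv (fun t => Tfun a b n0 n1 n2 B B_I y t (Sum.inr (Sum.inr i)))) s)
      = ∫ s in a..b, ∑ i : Fin n2, x s (Sum.inr (Sum.inr i)) * y s (Sum.inr (Sum.inr i)) := by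
    apply intervalIntegral.integral_congr_ae
    filter_upwards [deriv2_n2_ae hab' hBI hx (B := B), deriv2_n2_ae hab' hBI hy (B := B), hIoo]
      with s hdx hdy hIo hs
    exact Finset.sum_congr rfl fun i _ => by rw [hdx i (hIo hs), hdy i (hIo hs)]
  rw [h0, h1, h2]
  have toIcc : ∀ {f : ℝ → ℝ}, Integrable f (μab a b) → IntegrableOn f (Set.Icc a b) volume :=
    fun h => h
  have hI0 : IntervalIntegrable
      (fun s => ∑ i : Fin n0, x s (Sum.inl i) * y s (Sum.inl i)) volume a b :=
    aux_intInt (toIcc (integrable_finset_sum _ fun i _ =>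
      aux_mul_int (aux_memLp_eval hx _) (aux_memLp_eval hy _))) hab' haI hbI
  have hI1 : IntervalIntegrable
      (fun s => ∑ i : Fin n1, x s (Sum.inr (Sum.inl i)) * y s (Sum.inr (Sum.inl i))) volume a b :=
    aux_intInt (toIcc (integrable_finset_sum _ fun i _ =>
      aux_mul_int (aux_memLp_eval hx _) (aux_memLp_eval hy _))) hab' haI hbI
  have hI2 : IntervalIntegrable
      (fun s => ∑ i : Fin n2, x s (Sum.inr (Sum.inr i)) * y s (Sum.inr (Sum.inr i))) volume a b :=
    aux_intInt (toIcc (integrable_finset_sum _ fun i _ =>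
      aux_mul_int (aux_memLp_eval hx _) (aux_memLp_eval hy _))) hab' haI hbI
  rw [← intervalIntegral.integral_add hI0 hI1, ← intervalIntegral.integral_add (hI0.add hI1) hI2]
  apply intervalIntegral.integral_congr
  intro s _
  simp [Fintype.sum_sum_type, add_assoc]


end PIEpaper

end AuxUnitary
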